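/- Let (X, m) be a measure space such that the Hilbert space L²(X, m; ℂ) is separable, and let Y be a topological space equipped with its Borel σ-algebra and a finite measure m′. Let J : C_b(Y; ℂ) → L²(Y, m′) denote the canonical (bounded linear) map from the bounded continuous functions into L². If K : L²(X, m) → C_b(Y; ℂ) is a bounded linear operator, then the composition J ∘ K : L²(X, m) → L²(Y, m′) is a Hilbert–Schmidt operator and its Hilbert–Schmidt norm is at most ‖K‖ · (m′(Y))^{1/2}; equivalently, for every orthonormal (Hilbert) basis (φ_i)_{i∈ι} of L²(X, m) one has ∑_{i∈ι} ‖J(K φ_i)‖²_{L²(Y,m′)} ≤ ‖K‖² · m′(Y). -/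

import Mathlib

open MeasureTheory BoundedContinuousFunction
open scoped ComplexInnerProductSpace

lemma integrable_norm_sq_bcf {Y : Type*} [TopologicalSpace Y] [MeasurableSpace Y]
    [BorelSpace Y] (m' : Measure Y) [IsFiniteMeasure m'] (f : Y →ᵇ ℂ) :
    Integrable (fun y => ‖f y‖ ^ 2) m' := by
  refine ⟨(f.continuous.norm.pow 2).aestronglyMeasurable, ?_⟩
  apply HasFiniteIntegral.of_bounded (C := ‖f‖ ^ 2)
  filter_upwards with y
  rw [Real.norm_eq_abs, abs_of_nonneg (by positivity)]
  exact pow_le_pow_left₀ (norm_nonneg _) (f.norm_coe_le_norm y) 2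

lemma norm_toLp_sq_eq {Y : Type*} [TopologicalSpace Y] [MeasurableSpace Y]
    [BorelSpace Y] (m' : Measure Y) [IsFiniteMeasure m'] (f : Y →ᵇ ℂ) :
    ‖BoundedContinuousFunction.toLp (E := ℂ) 2 m' ℂ f‖ ^ 2 = ∫ y, ‖f y‖ ^ 2 ∂m' := by
  set g := BoundedContinuousFunction.toLp (E := ℂ) 2 m' ℂ f with hg
  have h1 : ‖g‖ ^ 2 = RCLike.re (⟪g, g⟫) := (inner_self_eq_norm_sq g).symm
  have h2 : (⟪g, g⟫ : ℂ) = ∫ y, ⟪g y, g y⟫ ∂m' := MeasureTheory.L2.inner_def g g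
  have hae : (g : Y → ℂ) =ᵐ[m'] f := BoundedContinuousFunction.coeFn_toLp 2 m' ℂ f
  have h3 : ∫ y, ⟪g y, g y⟫ ∂m' = ∫ y, (RCLike.ofReal (‖f y‖ ^ 2) : ℂ) ∂m' := by
    refine integral_congr_ae ?_
    filter_upwards [hae] with y hy
    rw [hy, inner_self_eq_norm_sq_to_K, RCLike.ofReal_pow]
  rw [h1, h2, h3, integral_ofReal, RCLike.ofReal_re]

/-- **Hilbert–Schmidt bound for operators into bounded continuous functions.**
If `L²(X,m;ℂ)` is separable, `m'` is a finite Borel measure on a topological space `Y`,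
`J : C_b(Y;ℂ) → L²(Y,m')` is the canonical bounded inclusion and `K : L²(X,m) → C_b(Y;ℂ)`
is a bounded linear operator, then `J ∘ K` is Hilbert–Schmidt with
`‖J ∘ K‖_{HS}² ≤ ‖K‖² · m'(Y)`: for every Hilbert basis `(φ_i)` of `L²(X,m)`,
the family `‖J(K φ_i)‖²` is summable with sum at most `‖K‖² · m'(Y)`. -/
theorem hilbert_schmidt_of_bounded_into_Cb
    {X : Type*} [MeasurableSpace X] (m : Measure X)
    [TopologicalSpace.SeparableSpace (Lp ℂ 2 m)]
    {Y : Type*} [TopologicalSpace Y] [MeasurableSpace Y] [BorelSpace Y]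
    (m' : Measure Y) [IsFiniteMeasure m']
    (K : Lp ℂ 2 m →L[ℂ] (Y →ᵇ ℂ))
    {ι : Type*} (b : HilbertBasis ι ℂ (Lp ℂ 2 m)) :
    Summable (fun i : ι =>
      ‖BoundedContinuousFunction.toLp (E := ℂ) 2 m' ℂ (K (b i))‖ ^ 2) ∧
    ∑' i : ι, ‖BoundedContinuousFunction.toLp (E := ℂ) 2 m' ℂ (K (b i))‖ ^ 2 ≤
      ‖K‖ ^ 2 * (m' Set.univ).toReal := by
  -- pointwise Bessel-type bound
  have key : ∀ (F : Finset ι) (y : Y), ∑ i ∈ F, ‖K (b i) y‖ ^ 2 ≤ ‖K‖ ^ 2 := by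
    intro F y
    set ℓ : Lp ℂ 2 m →L[ℂ] ℂ := (BoundedContinuousFunction.evalCLM ℂ y).comp K with hℓ
    set k : Lp ℂ 2 m := (InnerProductSpace.toDual ℂ (Lp ℂ 2 m)).symm ℓ with hkdef
    have hk : ∀ φ : Lp ℂ 2 m, ⟪k, φ⟫ = K φ y := fun φ =>
      InnerProductSpace.toDual_symm_apply
    have hknorm : ‖k‖ ≤ ‖K‖ := by
      rw [hkdef, LinearIsometryEquiv.norm_map]
      refine ContinuousLinearMap.opNorm_le_bound _ (norm_nonneg K) fun φ => ?_
      calc ‖ℓ φ‖ = ‖K φ y‖ := rfl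
        _ ≤ ‖K φ‖ := (K φ).norm_coe_le_norm y
        _ ≤ ‖K‖ * ‖φ‖ := K.le_opNorm φ
    calc ∑ i ∈ F, ‖K (b i) y‖ ^ 2 = ∑ i ∈ F, ‖⟪b i, k⟫‖ ^ 2 := by
          refine Finset.sum_congr rfl fun i _ => ?_
          rw [← hk (b i), ← inner_conj_symm, RCLike.norm_conj]
      _ ≤ ‖k‖ ^ 2 := b.orthonormal.sum_inner_products_le k
      _ ≤ ‖K‖ ^ 2 := by gcongr
  have hsum : ∀ F : Finset ι,
      ∑ i ∈ F, ‖BoundedContinuousFunction.toLp (E := ℂ) 2 m' ℂ (K (b i))‖ ^ 2 ≤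
        ‖K‖ ^ 2 * (m' Set.univ).toReal := by
    intro F
    calc ∑ i ∈ F, ‖BoundedContinuousFunction.toLp (E := ℂ) 2 m' ℂ (K (b i))‖ ^ 2
        = ∑ i ∈ F, ∫ y, ‖K (b i) y‖ ^ 2 ∂m' :=
          Finset.sum_congr rfl fun i _ => norm_toLp_sq_eq m' (K (b i))
      _ = ∫ y, ∑ i ∈ F, ‖K (b i) y‖ ^ 2 ∂m' :=
          (integral_finset_sum F fun i _ => integrable_norm_sq_bcf m' (K (b i))).symm
      _ ≤ ∫ _, ‖K‖ ^ 2 ∂m' := by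
          refine integral_mono (integrable_finset_sum F fun i _ =>
            integrable_norm_sq_bcf m' (K (b i))) (integrable_const _) fun y => key F y
      _ = ‖K‖ ^ 2 * (m' Set.univ).toReal := by
          rw [integral_const, smul_eq_mul, mul_comm, Measure.real]
  have hS : Summable (fun i : ι =>
      ‖BoundedContinuousFunction.toLp (E := ℂ) 2 m' ℂ (K (b i))‖ ^ 2) :=
    summable_of_sum_le (fun i => by positivity) hsum
  exact ⟨hS, Summable.tsum_le_of_sum_le hS hsum⟩
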